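/- A set A ⊆ (0,∞) is the set of nonzero distances of some nonempty perfect compact ultrametric space if and only if A can be enumerated as a strictly decreasing sequence (d_i) with limit 0. -/

import Mathlib

open Filter Set

namespace Stmt11Aux

lemma exists_ne_of_ne {x y : ℕ → Bool} (h : x ≠ y) : ∃ n, x n ≠ y n := by
  by_contra hc
  push_neg at hc
  exact h (funext fun n => hc n)

open Classical in
noncomputable def udist (d : ℕ → ℝ) (x y : ℕ → Bool) : ℝ :=
  if h : x = y then 0 else d (Nat.find (exists_ne_of_ne h))

section D
variable {d : ℕ → ℝ}

lemma d_nonneg (hd : StrictAnti d) (h0 : Tendsto d atTop (nhds 0)) (m : ℕ) : 0 ≤ d m :=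
  le_of_tendsto h0 (eventually_atTop.2 ⟨m, fun _ hk => hd.antitone hk⟩)

lemma d_pos (hd : StrictAnti d) (h0 : Tendsto d atTop (nhds 0)) (m : ℕ) : 0 < d m :=
  lt_of_le_of_lt (d_nonneg hd h0 (m + 1)) (hd (Nat.lt_succ_self m))

lemma udist_self (x : ℕ → Bool) : udist d x x = 0 := by simp [udist]

lemma udist_of_ne {x y : ℕ → Bool} (h : x ≠ y) :
    udist d x y = d (Nat.find (exists_ne_of_ne h)) := dif_neg h

lemma udist_nonneg' (hd : StrictAnti d) (h0 : Tendsto d atTop (nhds 0))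
    (x y : ℕ → Bool) : 0 ≤ udist d x y := by
  by_cases h : x = y
  · simp [h, udist_self]
  · rw [udist_of_ne h]; exact (d_pos hd h0 _).le

lemma udist_comm (x y : ℕ → Bool) : udist d x y = udist d y x := by
  by_cases h : x = y
  · simp [h]
  · have h' : y ≠ x := fun e => h e.symm
    rw [udist_of_ne h, udist_of_ne h']
    congr 1
    apply le_antisymm
    · exact Nat.find_le (Nat.find_spec (exists_ne_of_ne h')).symm
    · exact Nat.find_le (Nat.find_spec (exists_ne_of_ne h)).symm

lemma udist_ultra (hd : StrictAnti d) (h0 : Tendsto d atTop (nhds 0)) (x y z : ℕ → Bool) :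
    udist d x y ≤ max (udist d x z) (udist d z y) := by
  by_cases hxy : x = y
  · subst hxy
    rw [udist_self]
    exact le_max_of_le_left (udist_nonneg' hd h0 x z)
  by_cases hxz : x = z
  · subst hxz; exact le_max_right _ _
  by_cases hzy : z = y
  · subst hzy; exact le_max_left _ _
  rw [udist_of_ne hxy, udist_of_ne hxz, udist_of_ne hzy]
  have key : Nat.find (exists_ne_of_ne hxz) ≤ Nat.find (exists_ne_of_ne hxy) ∨
      Nat.find (exists_ne_of_ne hzy) ≤ Nat.find (exists_ne_of_ne hxy) := by
    by_contra hc
    push_neg at hc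
    have e1 : x (Nat.find (exists_ne_of_ne hxy)) = z (Nat.find (exists_ne_of_ne hxy)) := by
      have := Nat.find_min (exists_ne_of_ne hxz) hc.1
      simpa using this
    have e2 : z (Nat.find (exists_ne_of_ne hxy)) = y (Nat.find (exists_ne_of_ne hxy)) := by
      have := Nat.find_min (exists_ne_of_ne hzy) hc.2
      simpa using this
    exact Nat.find_spec (exists_ne_of_ne hxy) (e1.trans e2)
  rcases key with h | h
  · exact le_max_of_le_left (hd.antitone h)
  · exact le_max_of_le_right (hd.antitone h)

noncomputable def flipn (x : ℕ → Bool) (n : ℕ) : ℕ → Bool :=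
  Function.update x n (!(x n))

lemma flipn_ne (x : ℕ → Bool) (n : ℕ) : flipn x n ≠ x := by
  intro h
  have := congrFun h n
  simp [flipn] at this

lemma udist_flipn (x : ℕ → Bool) (n : ℕ) : udist d x (flipn x n) = d n := by
  have h : x ≠ flipn x n := fun e => flipn_ne x n e.symm
  rw [udist_of_ne h]
  congr 1
  have hle : Nat.find (exists_ne_of_ne h) ≤ n :=
    Nat.find_le (by simp [flipn])
  rcases lt_or_eq_of_le hle with hlt | heq
  · exfalso
    have hspec := Nat.find_spec (exists_ne_of_ne h)
    rw [show flipn x n (Nat.find (exists_ne_of_ne h)) = x (Nat.find (exists_ne_of_ne h)) from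
      Function.update_of_ne hlt.ne _ _] at hspec
    exact hspec rfl
  · exact heq

lemma udist_open_iff (hd : StrictAnti d) (h0 : Tendsto d atTop (nhds 0))
    (s : Set (ℕ → Bool)) :
    IsOpen s ↔ ∀ x ∈ s, ∃ ε > 0, ∀ y, udist d x y < ε → y ∈ s := by
  constructor
  · intro hs x hx
    obtain ⟨I, u, hIu, hsub⟩ := isOpen_pi_iff.1 hs x hx
    refine ⟨d (I.sup id + 1), d_pos hd h0 _, fun y hy => ?_⟩
    by_cases hxy : x = y
    · exact hxy ▸ hx
    rw [udist_of_ne hxy] at hy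
    have hk : I.sup id + 1 < Nat.find (exists_ne_of_ne hxy) := hd.lt_iff_gt.1 hy
    apply hsub
    intro i hi
    have hiN : i < I.sup id + 1 := Nat.lt_succ_of_le (Finset.le_sup (f := id) hi)
    have hxi : x i = y i := by
      have := Nat.find_min (exists_ne_of_ne hxy) (hiN.trans hk)
      simpa using this
    rw [← hxi]
    exact (hIu i hi).2
  · intro H
    rw [isOpen_iff_mem_nhds]
    intro x hx
    obtain ⟨ε, hε, hball⟩ := H x hx
    obtain ⟨N, hdN⟩ := ((tendsto_order.1 h0).2 ε hε).exists
    refine mem_nhds_iff.2 ⟨{y | ∀ i < N, y i = x i}, ?_, ?_, fun i _ => rfl⟩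
    · intro y hy
      apply hball
      by_cases hxy : x = y
      · simpa [hxy, udist_self] using hε
      rw [udist_of_ne hxy]
      have hk : N ≤ Nat.find (exists_ne_of_ne hxy) := by
        by_contra hc
        push_neg at hc
        exact Nat.find_spec (exists_ne_of_ne hxy)
          (hy (Nat.find (exists_ne_of_ne hxy)) hc).symm
      exact lt_of_le_of_lt (hd.antitone hk) hdN
    · have heq : {y : ℕ → Bool | ∀ i < N, y i = x i} =
          ⋂ i ∈ Finset.range N, (fun y : ℕ → Bool => y i) ⁻¹' {x i} := by
        ext y; simp [Finset.mem_range]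
      rw [heq]
      exact isOpen_biInter_finset fun i _ =>
        (isOpen_discrete _).preimage (continuous_apply i)

noncomputable def umetric (hd : StrictAnti d) (h0 : Tendsto d atTop (nhds 0)) :
    MetricSpace (ℕ → Bool) :=
  MetricSpace.ofDistTopology (udist d) udist_self udist_comm
    (fun x y z => le_trans (udist_ultra hd h0 x z y)
      (max_le (le_add_of_nonneg_right (udist_nonneg' hd h0 _ _))
        (le_add_of_nonneg_left (udist_nonneg' hd h0 _ _))))
    (udist_open_iff hd h0)
    (fun x y h => by
      by_contra hxy
      rw [udist_of_ne hxy] at h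
      exact (d_pos hd h0 _).ne' h)

end D

lemma enum (A : Set ℝ) (hA : A ⊆ Set.Ioi (0:ℝ)) (hinf : A.Infinite)
    (hfin : ∀ ε > (0:ℝ), (A ∩ Ici ε).Finite) :
    ∃ d : ℕ → ℝ, StrictAnti d ∧ Tendsto d atTop (nhds 0) ∧ A = Set.range d := by
  classical
  have hne : ∀ x ∈ A, (A ∩ Iio x).Nonempty := by
    intro x hx
    by_contra hc
    rw [Set.not_nonempty_iff_eq_empty] at hc
    have hsub : A ⊆ A ∩ Ici x := by
      intro a ha
      rcases lt_or_ge a x with h | h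
      · have : a ∈ A ∩ Iio x := ⟨ha, h⟩
        rw [hc] at this
        exact this.elim
      · exact ⟨ha, h⟩
    exact hinf ((hfin x (hA hx)).subset hsub)
  have key : ∀ x ∈ A, ∃ m, IsGreatest (A ∩ Iio x) m := by
    intro x hx
    obtain ⟨a, haA, hax⟩ := hne x hx
    have htfin : (A ∩ Ici a ∩ Iio x).Finite := ((hfin a (hA haA)).inter_of_left _)
    have htne : (A ∩ Ici a ∩ Iio x).Nonempty := ⟨a, ⟨haA, le_refl a⟩, hax⟩
    have hmem : sSup (A ∩ Ici a ∩ Iio x) ∈ A ∩ Ici a ∩ Iio x := htne.csSup_mem htfin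
    refine ⟨sSup (A ∩ Ici a ∩ Iio x), ⟨hmem.1.1, hmem.2⟩, ?_⟩
    intro b hb
    rcases le_or_gt a b with h | h
    · exact le_csSup htfin.bddAbove ⟨⟨hb.1, h⟩, hb.2⟩
    · exact le_trans h.le (le_csSup htfin.bddAbove ⟨⟨haA, le_refl a⟩, hax⟩)
  obtain ⟨a0, ha0⟩ := hinf.nonempty
  have htop : ∃ m, IsGreatest A m := by
    have htfin : (A ∩ Ici a0).Finite := hfin a0 (hA ha0)
    have htne : (A ∩ Ici a0).Nonempty := ⟨a0, ha0, Set.self_mem_Ici⟩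
    have hmem : sSup (A ∩ Ici a0) ∈ A ∩ Ici a0 := htne.csSup_mem htfin
    refine ⟨sSup (A ∩ Ici a0), hmem.1, fun b hb => ?_⟩
    rcases le_or_gt a0 b with h | h
    · exact le_csSup htfin.bddAbove ⟨hb, h⟩
    · exact le_trans h.le (le_csSup htfin.bddAbove ⟨ha0, Set.self_mem_Ici⟩)
  obtain ⟨m0, hm0⟩ := htop
  choose! F hF using key
  set d : ℕ → ℝ := fun n => Nat.rec m0 (fun _ prev => F prev) n with hdDef
  have hd0 : d 0 = m0 := rfl
  have hdsucc : ∀ n, d (n + 1) = F (d n) := fun n => rfl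
  have hdA : ∀ n, d n ∈ A ∧ IsGreatest (A ∩ Iio (d n)) (d (n + 1)) := by
    intro n
    induction n with
    | zero =>
      refine ⟨hm0.1, ?_⟩
      rw [hdsucc, hd0]
      exact hF m0 hm0.1
    | succ k ih =>
      have hmem : d (k + 1) ∈ A := by
        rw [hdsucc]
        exact (hF (d k) ih.1).1.1
      exact ⟨hmem, by rw [hdsucc (k+1)]; exact hF _ hmem⟩
  have hanti : StrictAnti d := strictAnti_nat_of_succ_lt fun n => (hdA n).2.1.2
  have hpos : ∀ n, 0 < d n := fun n => hA (hdA n).1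
  have hbdd : BddBelow (Set.range d) := ⟨0, by rintro _ ⟨n, rfl⟩; exact (hpos n).le⟩
  have hlim : Tendsto d atTop (nhds (⨅ n, d n)) :=
    tendsto_atTop_ciInf hanti.antitone hbdd
  have hinf0 : (⨅ n, d n) = 0 := by
    have hge : 0 ≤ ⨅ n, d n := le_ciInf fun n => (hpos n).le
    rcases eq_or_lt_of_le hge with h | h
    · exact h.symm
    · exfalso
      have hsub : Set.range d ⊆ A ∩ Ici (⨅ n, d n) := by
        rintro _ ⟨n, rfl⟩
        exact ⟨(hdA n).1, ciInf_le hbdd n⟩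
      exact Set.infinite_range_of_injective hanti.injective
        ((hfin _ h).subset hsub)
  rw [hinf0] at hlim
  refine ⟨d, hanti, hlim, ?_⟩
  apply Set.Subset.antisymm
  · intro a ha
    by_contra hnr
    have hapos : 0 < a := hA ha
    have hex : ∃ n, d n < a := ((tendsto_order.1 hlim).2 a hapos).exists
    have hNlt : d (Nat.find hex) < a := Nat.find_spec hex
    cases hN' : Nat.find hex with
    | zero =>
      rw [hN', hd0] at hNlt
      exact absurd hNlt (not_lt.2 (hm0.2 ha))
    | succ m =>
      rw [hN'] at hNlt
      have hm : ¬ d m < a := Nat.find_min hex (by omega)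
      have ham : a < d m := by
        rcases lt_or_eq_of_le (not_lt.1 hm) with h | h
        · exact h
        · exact absurd ⟨m, h.symm⟩ hnr
      have hle := (hdA m).2.2 ⟨ha, ham⟩
      exact absurd (lt_of_le_of_lt hle hNlt) (lt_irrefl a)
  · rintro _ ⟨n, rfl⟩
    exact (hdA n).1

end Stmt11Aux

open Stmt11Aux in
theorem stmt_11 (A : Set ℝ) (hA : A ⊆ Set.Ioi (0 : ℝ)) :
    (∃ (X : Type) (_ : MetricSpace X),
        (∀ x y z : X, dist x y ≤ max (dist x z) (dist z y)) ∧
        Nonempty X ∧ (∀ x : X, (nhdsWithin x {x}ᶜ).NeBot) ∧ CompactSpace X ∧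
        A = {d : ℝ | ∃ x y : X, x ≠ y ∧ d = dist x y}) ↔
      ∃ d : ℕ → ℝ, StrictAnti d ∧ Filter.Tendsto d Filter.atTop (nhds 0) ∧
        A = Set.range d := by
  constructor
  · rintro ⟨X, inst, hultra, ⟨x0⟩, hperf, hcomp, hAeq⟩
    subst hAeq
    have iso : ∀ x y z : X, dist x z < dist x y → dist z y = dist x y := by
      intro x y z h
      apply le_antisymm
      · calc dist z y ≤ max (dist z x) (dist x y) := hultra z y x
          _ = dist x y := max_eq_right (by rw [dist_comm z x]; exact h.le)
      · by_contra h2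
        push_neg at h2
        exact absurd (hultra x y z) (not_le.2 (max_lt h h2))
    set A : Set ℝ := {d : ℝ | ∃ x y : X, x ≠ y ∧ d = dist x y} with hAdef
    have step1 : ∀ ε > (0:ℝ), ∃ a ∈ A, a < ε := by
      intro ε hε
      have hcl : x0 ∈ closure ({x0}ᶜ : Set X) :=
        mem_closure_iff_nhdsWithin_neBot.2 (hperf x0)
      obtain ⟨y, hy, hyd⟩ := Metric.mem_closure_iff.1 hcl ε hε
      exact ⟨dist x0 y, ⟨x0, y, fun h => hy h.symm, rfl⟩, hyd⟩
    have hinf : A.Infinite := by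
      intro hc
      have hAne : A.Nonempty := by
        obtain ⟨a, ha, -⟩ := step1 1 one_pos
        exact ⟨a, ha⟩
      have hmem : sInf A ∈ A := hAne.csInf_mem hc
      obtain ⟨a, ha, halt⟩ := step1 (sInf A) (hA hmem)
      exact absurd (csInf_le hc.bddBelow ha) (not_le.2 halt)
    have hfin : ∀ ε > (0:ℝ), (A ∩ Ici ε).Finite := by
      intro ε hε
      by_contra hc
      have hc' : (A ∩ Ici ε).Infinite := hc
      haveI := hcomp
      have hKc : IsCompact ((fun p : X × X => dist p.1 p.2) '' Set.univ) :=
        isCompact_univ.image continuous_dist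
      have hSK : A ∩ Ici ε ⊆ (fun p : X × X => dist p.1 p.2) '' Set.univ := by
        rintro a ⟨⟨x, y, -, rfl⟩, -⟩
        exact ⟨(x, y), mem_univ _, rfl⟩
      obtain ⟨r, hrK, hr⟩ := hc'.exists_accPt_of_subset_isCompact hKc hSK
      have hrε : ε ≤ r := by
        have hcl : r ∈ closure (A ∩ Ici ε) :=
          mem_closure_iff_clusterPt.2 (AccPt.clusterPt hr)
        have h2 : r ∈ closure (Ici ε) := closure_mono inter_subset_right hcl
        rwa [closure_Ici] at h2
      have hrpos : 0 < r := lt_of_lt_of_le hε hrε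
      have hseq : ∀ n : ℕ, ∃ b, b ∈ A ∧ b ≠ r ∧ dist r b < 1 / (n + 1) := by
        intro n
        obtain ⟨y, ⟨hy1, hy2⟩, hy3⟩ := (accPt_iff_nhds (x := r) (C := A ∩ Ici ε)).1 hr
          (Metric.ball r (1 / (n + 1))) (Metric.ball_mem_nhds r (by positivity))
        exact ⟨y, hy2.1, hy3, by rwa [Metric.mem_ball, dist_comm] at hy1⟩
      choose a haA hane hadist using hseq
      have hatend : Tendsto a atTop (nhds r) := by
        rw [tendsto_iff_dist_tendsto_zero]
        exact squeeze_zero (fun n => dist_nonneg)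
          (fun n => by rw [dist_comm]; exact (hadist n).le)
          tendsto_one_div_add_atTop_nhds_zero_nat
      have hpairs : ∀ n, ∃ p : X × X, p.1 ≠ p.2 ∧ a n = dist p.1 p.2 := by
        intro n
        obtain ⟨x, y, hxy, hd⟩ := haA n
        exact ⟨(x, y), hxy, hd⟩
      choose p hpne hpd using hpairs
      obtain ⟨x', -, φ, hφ, hxconv⟩ :=
        isCompact_univ.tendsto_subseq (x := fun n => (p n).1) (fun n => mem_univ _)
      obtain ⟨y', -, ψ, hψ, hyconv⟩ :=
        isCompact_univ.tendsto_subseq (x := fun n => ((fun k => (p k).2) ∘ φ) n)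
          (fun n => mem_univ _)
      set q : ℕ → ℕ := φ ∘ ψ with hq
      have hxc : Tendsto (fun n => (p (q n)).1) atTop (nhds x') :=
        hxconv.comp hψ.tendsto_atTop
      have hyc : Tendsto (fun n => (p (q n)).2) atTop (nhds y') := hyconv
      have hdistconv : Tendsto (fun n => dist (p (q n)).1 (p (q n)).2) atTop
          (nhds (dist x' y')) := hxc.dist hyc
      have hdistconv2 : Tendsto (fun n => dist (p (q n)).1 (p (q n)).2) atTop (nhds r) := by
        have heq : (fun n => dist (p (q n)).1 (p (q n)).2) = fun n => a (q n) := by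
          funext n; exact (hpd (q n)).symm
        rw [heq]
        exact hatend.comp (hφ.comp hψ).tendsto_atTop
      have hdxy : dist x' y' = r := tendsto_nhds_unique hdistconv hdistconv2
      obtain ⟨N1, hN1⟩ := Metric.tendsto_atTop.1 hxc r hrpos
      obtain ⟨N2, hN2⟩ := Metric.tendsto_atTop.1 hyc r hrpos
      set n := max N1 N2 with hn
      have h1 : dist (p (q n)).1 x' < r := hN1 n (le_max_left _ _)
      have h2 : dist (p (q n)).2 y' < r := hN2 n (le_max_right _ _)
      have e1 : dist (p (q n)).1 y' = dist x' y' := by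
        apply iso x' y' (p (q n)).1
        rw [dist_comm x' (p (q n)).1, hdxy]
        exact h1
      have e2 : dist (p (q n)).2 (p (q n)).1 = dist y' (p (q n)).1 := by
        apply iso y' (p (q n)).1 (p (q n)).2
        rw [dist_comm y' (p (q n)).2, dist_comm y' (p (q n)).1, e1, hdxy]
        exact h2
      have hfinal : dist (p (q n)).1 (p (q n)).2 = r := by
        rw [dist_comm (p (q n)).1 (p (q n)).2, e2, dist_comm y' (p (q n)).1, e1, hdxy]
      exact hane (q n) ((hpd (q n)).trans hfinal)
    exact enum A hA hinf hfin
  · rintro ⟨d, hd, h0, hAeq⟩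
    subst hAeq
    letI minst := umetric hd h0
    refine ⟨ℕ → Bool, minst, ?_, ⟨fun _ => false⟩, ?_, ?_, ?_⟩
    · exact fun x y z => udist_ultra hd h0 x y z
    · intro x
      rw [← mem_closure_iff_nhdsWithin_neBot, Metric.mem_closure_iff]
      intro ε hε
      obtain ⟨N, hN⟩ := ((tendsto_order.1 h0).2 ε hε).exists
      refine ⟨flipn x N, flipn_ne x N, ?_⟩
      show udist d x (flipn x N) < ε
      rw [udist_flipn]; exact hN
    · exact (inferInstanceAs (@CompactSpace (ℕ → Bool) Pi.topologicalSpace))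
    · apply Set.Subset.antisymm
      · rintro _ ⟨n, rfl⟩
        exact ⟨fun _ => false, flipn (fun _ => false) n, fun e => flipn_ne _ n e.symm,
          (udist_flipn _ n).symm⟩
      · rintro _ ⟨x, y, hxy, rfl⟩
        show udist d x y ∈ Set.range d
        rw [udist_of_ne hxy]
        exact ⟨_, rfl⟩
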